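/- Let ϑₙ = π(2⁻¹ + 2⁻² + ⋯ + 2⁻ⁿ) = π(1 − 2⁻ⁿ), ζₙ = e^{iϑₙ}, and uₙ(z) = Re((ζₙ + z)/(ζₙ − z)) for n ≥ 1. Let Θ ∈ (0, 2π) with Θ ≠ π and Θ ≠ ϑₙ for all n ≥ 1, and let c > 0. Then there exist a constant C < ∞ and r₀ ∈ (0, 1) such that for every n ≥ 1, every r ∈ (r₀, 1), and every ϑ with |ϑ − Θ| < c(1 − r), one has uₙ(r e^{iϑ}) ≤ C(1 − r); moreover C does not depend on n. -/

import Mathlib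

open Complex MeasureTheory Filter Set

noncomputable section

/-- `ϑₙ = π(2⁻¹ + ⋯ + 2⁻⁽ⁿ⁺¹⁾) = π(1 - 2⁻⁽ⁿ⁺¹⁾)` (indexing from `n = 0`, so this is the
paper's `ϑ_{n+1}`). -/
def theta (n : ℕ) : ℝ := Real.pi * (1 - (1 / 2 : ℝ) ^ (n + 1))

def zeta (n : ℕ) : ℂ := Complex.exp (theta n * Complex.I)

/-- The Poisson kernel with pole `ζₙ`. -/
def uP (n : ℕ) (z : ℂ) : ℝ := ((zeta n + z) / (zeta n - z)).re

/-- injectivity of `exp (· * I)` on windows of width `< 2π`. -/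
lemma exp_mul_I_inj {a b : ℝ} (h : |a - b| < 2 * Real.pi)
    (he : Complex.exp (a * Complex.I) = Complex.exp (b * Complex.I)) : a = b := by
  rw [Complex.exp_eq_exp_iff_exists_int] at he
  obtain ⟨k, hk⟩ := he
  have him : a = b + k * (2 * Real.pi) := by
    have := congrArg Complex.im hk
    simpa [Complex.add_im, Complex.mul_im] using this
  have hab : a - b = (k : ℝ) * (2 * Real.pi) := by linarith
  rw [hab, abs_mul, abs_of_pos (by positivity : (0:ℝ) < 2 * Real.pi)] at h
  have h2π : (0:ℝ) < 2 * Real.pi := by positivity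
  have h1 : |(k : ℝ)| < 1 := by nlinarith [abs_nonneg (k : ℝ)]
  have h2 : |k| < 1 := by exact_mod_cast (by rwa [← Int.cast_abs] at h1 : ((|k| : ℤ) : ℝ) < 1)
  have hk0 : k = 0 := by rcases abs_lt.mp h2 with ⟨h3, h4⟩; omega
  rw [him, hk0]; simp

lemma chord_le (a b : ℝ) :
    ‖Complex.exp (a * Complex.I) - Complex.exp (b * Complex.I)‖ ≤ |a - b| := by
  have key : ‖Complex.exp (((a - b) : ℝ) * Complex.I) - 1‖ ≤ |a - b| := by
    rw [← Real.sqrt_sq (abs_nonneg (a - b)), ← Real.sqrt_sq (norm_nonneg _)]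
    apply Real.sqrt_le_sqrt
    rw [Complex.sq_norm]
    have h1 := Real.sin_sq_add_cos_sq (a - b)
    have h2 := Real.one_sub_sq_div_two_le_cos (x := a - b)
    simp only [Complex.normSq_apply, Complex.sub_re, Complex.sub_im,
      Complex.exp_ofReal_mul_I_re, Complex.exp_ofReal_mul_I_im, Complex.one_re, Complex.one_im]
    rw [_root_.sq_abs]
    nlinarith
  calc ‖Complex.exp (a * Complex.I) - Complex.exp (b * Complex.I)‖
      = ‖Complex.exp (b * Complex.I)‖
        * ‖Complex.exp (((a - b) : ℝ) * Complex.I) - 1‖ := by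
        rw [← norm_mul]
        congr 1
        rw [mul_sub, mul_one, ← Complex.exp_add]
        push_cast
        ring_nf
    _ ≤ |a - b| := by
        rw [Complex.norm_exp_ofReal_mul_I, one_mul]; exact key

lemma pos_inf {f : ℕ → ℝ} (h : ∀ n, 0 < f n) {L : ℝ} (hL : 0 < L)
    (ht : Tendsto f atTop (nhds L)) : ∃ δ > 0, ∀ n, δ ≤ f n := by
  have hev : ∀ᶠ n in atTop, L / 2 < f n := ht.eventually (eventually_gt_nhds (by linarith))
  obtain ⟨N, hN⟩ := eventually_atTop.mp hev
  refine ⟨min (L / 2) ((Finset.range (N + 1)).inf' ⟨N, by simp⟩ f), ?_, ?_⟩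
  · apply lt_min (by linarith)
    refine (Finset.lt_inf'_iff _).2 ?_
    exact fun n _ => h n
  · intro n
    rcases le_or_gt N n with hn | hn
    · exact le_trans (min_le_left _ _) (hN n hn).le
    · exact le_trans (min_le_right _ _)
        (Finset.inf'_le f (by simp [Finset.mem_range]; omega))

lemma uP_eq (n : ℕ) (z : ℂ) (h : zeta n ≠ z) :
    uP n z = (1 - Complex.normSq z) / Complex.normSq (zeta n - z) := by
  have h1 : Complex.normSq (zeta n) = 1 := by
    rw [Complex.normSq_eq_norm_sq, zeta, Complex.norm_exp_ofReal_mul_I]; norm_num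
  rw [uP, Complex.div_re, ← add_div]
  congr 1
  simp only [Complex.normSq_apply, Complex.add_re, Complex.add_im, Complex.sub_re,
    Complex.sub_im] at h1 ⊢
  linear_combination h1

/-- Uniform Stolz-sector estimate: if `Θ ∈ (0, 2π)`, `Θ ≠ π` and `Θ ≠ ϑₙ` for all `n`,
then for every `c > 0` there are `C < ∞` and `r₀ ∈ (0,1)` such that
`uₙ(r e^{iϑ}) ≤ C (1 - r)` for all `n`, all `r ∈ (r₀, 1)`, and all `ϑ` with
`|ϑ - Θ| < c (1 - r)`; the constant `C` does not depend on `n`. -/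
theorem uniform_sector_estimate (Θ : ℝ) (hΘ0 : 0 < Θ) (hΘ2 : Θ < 2 * Real.pi)
    (hΘπ : Θ ≠ Real.pi) (hΘn : ∀ n : ℕ, Θ ≠ theta n) (c : ℝ) (hc : 0 < c) :
    ∃ C : ℝ, ∃ r₀ : ℝ, r₀ ∈ Set.Ioo (0 : ℝ) 1 ∧
      ∀ n : ℕ, ∀ r : ℝ, r ∈ Set.Ioo r₀ 1 → ∀ ϑ : ℝ, |ϑ - Θ| < c * (1 - r) →
        uP n ((r : ℂ) * Complex.exp (ϑ * Complex.I)) ≤ C * (1 - r) := by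
  have hπ := Real.pi_pos
  have hth : ∀ n : ℕ, 0 < theta n ∧ theta n < Real.pi := by
    intro n
    have hp : (0:ℝ) < (1/2:ℝ) ^ (n+1) := by positivity
    have hp1 : (1/2:ℝ) ^ (n+1) < 1 := pow_lt_one₀ (by norm_num) (by norm_num) (by omega)
    constructor
    · unfold theta; nlinarith
    · unfold theta; nlinarith
  set ζΘ := Complex.exp (Θ * Complex.I) with hζΘ
  have hne : ∀ n, zeta n ≠ ζΘ := by
    intro n h
    refine hΘn n (exp_mul_I_inj (a := theta n) (b := Θ) ?_ h).symm
    obtain ⟨h1, h2⟩ := hth n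
    rw [abs_lt]; constructor <;> nlinarith
  have hne1 : (-1 : ℂ) ≠ ζΘ := by
    intro h
    refine hΘπ (exp_mul_I_inj (a := Real.pi) (b := Θ)
      (by rw [abs_lt]; constructor <;> nlinarith)
      (Complex.exp_pi_mul_I.trans h)).symm
  have hthlim : Tendsto theta atTop (nhds Real.pi) := by
    have h0 : Tendsto (fun n : ℕ => (1/2:ℝ) ^ (n+1)) atTop (nhds 0) :=
      (tendsto_pow_atTop_nhds_zero_of_lt_one (by norm_num) (by norm_num)).comp
        (tendsto_add_atTop_nat 1)
    have h1 : Tendsto (fun n : ℕ => Real.pi * (1 - (1/2:ℝ) ^ (n+1))) atTop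
        (nhds (Real.pi * (1 - 0))) :=
      ((tendsto_const_nhds (x := (1:ℝ))).sub h0).const_mul Real.pi
    have h2 : theta = fun n : ℕ => Real.pi * (1 - (1/2:ℝ) ^ (n+1)) := funext fun n => rfl
    rw [h2]; simpa using h1
  have hzlim : Tendsto (fun n => ‖zeta n - ζΘ‖) atTop
      (nhds (‖-1 - ζΘ‖)) := by
    have hce : Continuous fun x : ℝ => Complex.exp (x * Complex.I) := by continuity
    have h1 : Tendsto (fun n => zeta n) atTop (nhds (-1 : ℂ)) := by
      have := (hce.tendsto Real.pi).comp hthlim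
      simpa [zeta, Complex.exp_pi_mul_I, Function.comp_def] using this
    exact (continuous_norm.tendsto _).comp (h1.sub_const ζΘ)
  have hL : 0 < ‖-1 - ζΘ‖ := by
    rw [norm_pos_iff]; exact sub_ne_zero.mpr hne1
  have hf : ∀ n, 0 < ‖zeta n - ζΘ‖ := fun n => by
    rw [norm_pos_iff]; exact sub_ne_zero.mpr (hne n)
  obtain ⟨δ, hδ, hδf⟩ := pos_inf hf hL hzlim
  have hc1 : (0:ℝ) < c + 1 := by linarith
  refine ⟨8 / δ ^ 2, max (1 - δ / (2 * (c + 1))) (1/2), ⟨?_, ?_⟩, ?_⟩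
  · exact lt_of_lt_of_le (by norm_num) (le_max_right _ _)
  · apply max_lt _ (by norm_num)
    have : 0 < δ / (2 * (c + 1)) := by positivity
    linarith
  intro n r hr ϑ hϑ
  obtain ⟨hr1, hr2⟩ := hr
  have hr0 : (1:ℝ)/2 < r := lt_of_le_of_lt (le_max_right _ _) hr1
  have hrr : 1 - r < δ / (2 * (c + 1)) := by
    have := lt_of_le_of_lt (le_max_left _ _) hr1; linarith
  set z := (r:ℂ) * Complex.exp (ϑ * Complex.I) with hz
  have habsz : ‖z‖ = r := by
    rw [hz, norm_mul, Complex.norm_exp_ofReal_mul_I, mul_one, Complex.norm_real, Real.norm_eq_abs,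
      abs_of_pos (by linarith)]
  have hchord : ‖ζΘ - Complex.exp (ϑ * Complex.I)‖ ≤ c * (1 - r) := by
    calc ‖ζΘ - Complex.exp (ϑ * Complex.I)‖ ≤ |Θ - ϑ| := chord_le Θ ϑ
      _ = |ϑ - Θ| := abs_sub_comm _ _
      _ ≤ c * (1 - r) := hϑ.le
  have hzz : ‖Complex.exp (ϑ * Complex.I) - z‖ = 1 - r := by
    have he : Complex.exp (ϑ * Complex.I) - z = ((1 - r : ℝ) : ℂ) * Complex.exp (ϑ * Complex.I) := by
      rw [hz]; push_cast; ring
    rw [he, norm_mul, Complex.norm_exp_ofReal_mul_I, mul_one, Complex.norm_real, Real.norm_eq_abs,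
      abs_of_pos (by linarith)]
  have hlow : δ / 2 ≤ ‖zeta n - z‖ := by
    have t1 := norm_sub_le_norm_sub_add_norm_sub (zeta n) z ζΘ
    have t2 := norm_sub_le_norm_sub_add_norm_sub z (Complex.exp (ϑ * Complex.I)) ζΘ
    have e1 : ‖z - Complex.exp (ϑ * Complex.I)‖ = 1 - r := by
      rw [← hzz, norm_sub_rev]
    have e2 : ‖Complex.exp (ϑ * Complex.I) - ζΘ‖ ≤ c * (1 - r) := by
      rw [norm_sub_rev]; exact hchord
    have hδn := hδf n
    have hkey : (c + 1) * (1 - r) < δ / 2 := by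
      rw [lt_div_iff₀ (by positivity : (0:ℝ) < 2 * (c + 1))] at hrr
      nlinarith
    linarith
  have hznez : zeta n ≠ z := by
    intro h; rw [h, sub_self, norm_zero] at hlow; linarith
  rw [uP_eq n z hznez]
  have hnsz : Complex.normSq z = r ^ 2 := by
    rw [Complex.normSq_eq_norm_sq, habsz]
  have hnsd : (δ / 2) ^ 2 ≤ Complex.normSq (zeta n - z) := by
    rw [Complex.normSq_eq_norm_sq]
    exact pow_le_pow_left₀ (by linarith) hlow 2
  have hpos : 0 < Complex.normSq (zeta n - z) := lt_of_lt_of_le (by positivity) hnsd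
  rw [hnsz, div_le_iff₀ hpos]
  have key : 8 / δ ^ 2 * (1 - r) * ((δ / 2) ^ 2) ≤ 8 / δ ^ 2 * (1 - r) *
      Complex.normSq (zeta n - z) :=
    mul_le_mul_of_nonneg_left hnsd (mul_nonneg (by positivity) (by linarith))
  have keq : 8 / δ ^ 2 * (1 - r) * ((δ / 2) ^ 2) = 2 * (1 - r) := by
    field_simp; ring
  rw [keq] at key
  nlinarith [sq_nonneg (1 - r)]

end
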